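/- Let δ be a locally nilpotent derivation of the trinomial algebra R(g) that is homogeneous with respect to the K-grading defined by deg T_{ij} = Q(e_{ij}), where Q : Z^n → Z^n/Im(L*) is the projection. Then for each i = 0,1,2 there is at most one index j ∈ {1,...,n_i} with δ(T_{ij}) ≠ 0. -/

import Mathlib

open MvPolynomial
set_option synthInstance.maxHeartbeats 1000000
set_option maxHeartbeats 1000000

/-- Index set of the variables `T_{ij}`, `i = 0,1,2`, `j = 1,…,n_i`. -/
abbrev TrinIdx (n : Fin 3 → ℕ) : Type := Σ i : Fin 3, Fin (n i)

/-- The trinomial `g = T₀^{l₀} + T₁^{l₁} + T₂^{l₂}` where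
`T_i^{l_i} = ∏_j T_{ij}^{l_{ij}}`. -/
noncomputable def trinomial (K : Type*) [Field K] (n : Fin 3 → ℕ)
    (l : ∀ i : Fin 3, Fin (n i) → ℕ) : MvPolynomial (TrinIdx n) K :=
  ∑ i : Fin 3, ∏ j : Fin (n i), X (⟨i, j⟩ : TrinIdx n) ^ l i j

/-- The trinomial algebra `R(g) = K[T_{ij}]/(g)`. -/
abbrev TrinAlg (K : Type*) [Field K] (n : Fin 3 → ℕ) (l : ∀ i : Fin 3, Fin (n i) → ℕ) :
    Type _ :=
  MvPolynomial (TrinIdx n) K ⧸ Ideal.span {trinomial K n l}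

/-- The `k`-th row (`k = 1, 2`) of the matrix `L` with rows `(-l₀, l₁, 0)` and `(-l₀, 0, l₂)`,
viewed as an element of `ℤⁿ`. -/
def trinRow (n : Fin 3 → ℕ) (l : ∀ i : Fin 3, Fin (n i) → ℕ) (k : Fin 3) :
    TrinIdx n → ℤ :=
  fun x => if x.1 = 0 then -(l x.1 x.2 : ℤ) else if x.1 = k then (l x.1 x.2 : ℤ) else 0

/-- The grading group `K_gr = ℤⁿ / Im(L*)`. -/
abbrev TrinGradeGroup (n : Fin 3 → ℕ) (l : ∀ i : Fin 3, Fin (n i) → ℕ) : Type _ :=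
  (TrinIdx n → ℤ) ⧸ Submodule.span ℤ {trinRow n l 1, trinRow n l 2}

/-- The projection `Q : ℤⁿ → ℤⁿ / Im(L*)`. -/
def trinQ (n : Fin 3 → ℕ) (l : ∀ i : Fin 3, Fin (n i) → ℕ) (v : TrinIdx n → ℤ) :
    TrinGradeGroup n l :=
  Submodule.Quotient.mk v

/-- The degree `deg T_{ij} = Q(e_{ij})` of the generator `T_{ij}`. -/
noncomputable def trinDeg (n : Fin 3 → ℕ) (l : ∀ i : Fin 3, Fin (n i) → ℕ) (x : TrinIdx n) :
    TrinGradeGroup n l :=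
  trinQ n l (Pi.single x 1)

/-- The degree of a monomial with exponent vector `m`, with respect to a weight function
`w` on the variables taking values in an abelian group `A`. -/
def monWeight {A : Type*} [AddCommGroup A] {n : Fin 3 → ℕ} (w : TrinIdx n → A)
    (m : TrinIdx n →₀ ℕ) : A :=
  ∑ x ∈ m.support, m x • w x

/-- `f ∈ R(g)` is homogeneous of degree `d` with respect to the weights `w` if it is the image
of a polynomial all of whose monomials have `w`-degree `d`. -/
def IsHomog (K : Type*) [Field K] {n : Fin 3 → ℕ} (l : ∀ i : Fin 3, Fin (n i) → ℕ)
    {A : Type*} [AddCommGroup A] (w : TrinIdx n → A) (f : TrinAlg K n l) (d : A) : Prop :=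
  ∃ p : MvPolynomial (TrinIdx n) K,
    Ideal.Quotient.mk (Ideal.span {trinomial K n l}) p = f ∧
      ∀ m ∈ p.support, monWeight w m = d

/-- A derivation of `R(g)` is homogeneous w.r.t. the weights `w` if it shifts `w`-degrees by a
fixed element. -/
def IsHomogDer (K : Type*) [Field K] {n : Fin 3 → ℕ} (l : ∀ i : Fin 3, Fin (n i) → ℕ)
    {A : Type*} [AddCommGroup A] (w : TrinIdx n → A)
    (δ : Derivation K (TrinAlg K n l) (TrinAlg K n l)) : Prop :=
  ∃ d : A, ∀ (e : A) (f : TrinAlg K n l), IsHomog K l w f e → IsHomog K l w (δ f) (e + d)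

/-- A derivation is locally nilpotent if every element is annihilated by some power of it. -/
def IsLND (K : Type*) [Field K] {n : Fin 3 → ℕ} (l : ∀ i : Fin 3, Fin (n i) → ℕ)
    (δ : Derivation K (TrinAlg K n l) (TrinAlg K n l)) : Prop :=
  ∀ f : TrinAlg K n l, ∃ m : ℕ, (δ.toLinearMap ^ m) f = 0


namespace TrinAux


lemma prod_monomial_one {σ R : Type*} [CommSemiring R] {ι : Type*} (s : Finset ι)
    (f : ι → (σ →₀ ℕ)) :
    (∏ a ∈ s, (monomial (f a) (1 : R))) = monomial (∑ a ∈ s, f a) 1 := by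
  classical
  induction s using Finset.induction with
  | empty => simp
  | insert a s ha ih =>
      rw [Finset.prod_insert ha, Finset.sum_insert ha, ih, monomial_mul, one_mul]

lemma prod_X_pow_eq_monomial' {σ R : Type*} [CommSemiring R] {ι : Type*} (s : Finset ι)
    (y : ι → σ) (e : ι → ℕ) :
    (∏ a ∈ s, (X (y a) : MvPolynomial σ R) ^ e a)
      = monomial (∑ a ∈ s, Finsupp.single (y a) (e a)) 1 := by
  rw [← prod_monomial_one]
  exact Finset.prod_congr rfl fun a _ => X_pow_eq_monomial

lemma sum_single_apply_eq {ι σ : Type*} [DecidableEq σ] {s : Finset ι} {y : ι → σ} (e : ι → ℕ)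
    (hinj : ∀ a ∈ s, ∀ b ∈ s, y a = y b → a = b) {a₀ : ι} (ha₀ : a₀ ∈ s) :
    (∑ a ∈ s, Finsupp.single (y a) (e a)) (y a₀) = e a₀ := by
  classical
  rw [Finsupp.finset_sum_apply, Finset.sum_eq_single a₀]
  · simp
  · intro b hb hne
    rw [Finsupp.single_apply, if_neg]
    intro h; exact hne (hinj b hb a₀ ha₀ h)
  · intro h; exact absurd ha₀ h

lemma sum_single_apply_ne {ι σ : Type*} [DecidableEq σ] {s : Finset ι} {y : ι → σ} (e : ι → ℕ)
    {x : σ} (hx : ∀ a ∈ s, y a ≠ x) :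
    (∑ a ∈ s, Finsupp.single (y a) (e a)) x = 0 := by
  classical
  rw [Finsupp.finset_sum_apply]
  exact Finset.sum_eq_zero fun a ha => by rw [Finsupp.single_apply, if_neg (hx a ha)]

lemma prime_X_mv {σ : Type*} {R : Type*} [CommRing R] [IsDomain R] (v : σ) :
    Prime (MvPolynomial.X v : MvPolynomial σ R) := by
  classical
  let Φ : MvPolynomial σ R ≃ₐ[R] Polynomial (MvPolynomial {b : σ // b ≠ v} R) :=
    (MvPolynomial.renameEquiv R (Equiv.optionSubtypeNe v).symm).trans
      (MvPolynomial.optionEquivLeft R {b : σ // b ≠ v})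
  have h : Φ (MvPolynomial.X v) = Polynomial.X := by
    simp only [Φ, AlgEquiv.trans_apply, MvPolynomial.renameEquiv_apply, MvPolynomial.rename_X,
      Equiv.optionSubtypeNe_symm_self, MvPolynomial.optionEquivLeft_X_none]
  refine (MulEquiv.prime_iff Φ.toRingEquiv.toMulEquiv).mp ?_
  show Prime (Φ (MvPolynomial.X v))
  rw [h]
  exact Polynomial.prime_X


variable {K : Type*} [Field K] {n : Fin 3 → ℕ} {l : ∀ i : Fin 3, Fin (n i) → ℕ}

lemma monWeight_trinDeg (m : TrinIdx n →₀ ℕ) :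
    monWeight (trinDeg n l) m = trinQ n l (fun x => (m x : ℤ)) := by
  classical
  have hc : (fun x => (m x : ℤ))
      = ∑ x ∈ m.support, ((m x : ℤ) • (Pi.single x 1 : TrinIdx n → ℤ)) := by
    funext y
    rw [Finset.sum_apply]
    by_cases hy : y ∈ m.support
    · rw [Finset.sum_eq_single y]
      · simp
      · intro b hb hne
        have : y ≠ b := fun h => hne (h.symm)
        simp [Pi.single_apply, this]
      · intro hy'; exact absurd hy hy'
    · have h0 : m y = 0 := Finsupp.notMem_support_iff.mp hy
      rw [h0]
      push_cast
      symm
      refine Finset.sum_eq_zero fun b hb => ?_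
      have : y ≠ b := fun h => hy (h ▸ hb)
      simp [Pi.single_apply, this]
  unfold monWeight trinDeg trinQ
  rw [hc, ← Submodule.mkQ_apply, map_sum]
  refine Finset.sum_congr rfl fun x hx => ?_
  rw [map_smul, Submodule.mkQ_apply, Nat.cast_smul_eq_nsmul]

lemma isHomog_X (x : TrinIdx n) :
    IsHomog K l (trinDeg n l)
      (Ideal.Quotient.mk (Ideal.span {trinomial K n l}) (X x)) (trinDeg n l x) := by
  refine ⟨X x, rfl, ?_⟩
  intro m hm
  rw [support_X, Finset.mem_singleton] at hm
  subst hm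
  unfold monWeight
  rw [Finsupp.support_single_ne_zero _ one_ne_zero]
  simp

lemma span_cross {v : TrinIdx n → ℤ}
    (hv : v ∈ Submodule.span ℤ {trinRow n l 1, trinRow n l 2})
    (i : Fin 3) (j j' : Fin (n i)) :
    v ⟨i, j⟩ * (l i j' : ℤ) = v ⟨i, j'⟩ * (l i j : ℤ) := by
  induction hv using Submodule.span_induction with
  | mem x hx =>
      have hgen : ∀ k : Fin 3,
          (trinRow n l k) ⟨i, j⟩ * (l i j' : ℤ) = (trinRow n l k) ⟨i, j'⟩ * (l i j : ℤ) := by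
        intro k
        show (if i = 0 then -(l i j : ℤ) else if i = k then (l i j : ℤ) else 0) * (l i j' : ℤ)
          = (if i = 0 then -(l i j' : ℤ) else if i = k then (l i j' : ℤ) else 0) * (l i j : ℤ)
        by_cases h0 : i = 0 <;> by_cases hk : i = k <;> simp [h0, hk] <;> ring
      rcases hx with h | h
      · rw [h]; exact hgen 1
      · rw [Set.mem_singleton_iff] at h; rw [h]; exact hgen 2
  | zero => simp
  | add a b ha hb iha ihb =>
      simp only [Pi.add_apply, add_mul, iha, ihb]
  | smul r a ha iha =>
      simp only [Pi.smul_apply, smul_eq_mul, mul_assoc, iha]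

end TrinAux

namespace TrinAux


variable {R A : Type*} [CommRing R] [CommRing A] [Algebra R A]

lemma pow_apply_succ (δ : Derivation R A A) (m : ℕ) (x : A) :
    (δ.toLinearMap ^ (m + 1)) x = (δ.toLinearMap ^ m) (δ x) := by
  rw [pow_succ, Module.End.mul_apply]; rfl

lemma pow_apply_zero_of_le (δ : Derivation R A A) {x : A} {k : ℕ}
    (hk : (δ.toLinearMap ^ k) x = 0) {K : ℕ} (hK : k ≤ K) :
    (δ.toLinearMap ^ K) x = 0 := by
  obtain ⟨r, rfl⟩ := Nat.exists_eq_add_of_le hK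
  rw [add_comm, pow_add, Module.End.mul_apply, hk, map_zero]

lemma iterLeibniz (δ : Derivation R A A) (m : ℕ) (a b : A) :
    (δ.toLinearMap ^ m) (a * b)
      = ∑ k ∈ Finset.range (m + 1),
          (m.choose k) • ((δ.toLinearMap ^ k) a * (δ.toLinearMap ^ (m - k)) b) := by
  induction m generalizing a b with
  | zero => simp
  | succ m ih =>
    have h1 : (δ.toLinearMap ^ (m + 1)) (a * b)
        = (δ.toLinearMap ^ m) (a * δ b) + (δ.toLinearMap ^ m) (δ a * b) := by
      rw [pow_apply_succ, Derivation.leibniz, smul_eq_mul, smul_eq_mul, map_add, mul_comm b (δ a)]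
    rw [h1, ih a (δ b), ih (δ a) b]
    have e1 : ∑ k ∈ Finset.range (m + 1),
        (m.choose k) • ((δ.toLinearMap ^ k) a * (δ.toLinearMap ^ (m - k)) (δ b))
        = ∑ k ∈ Finset.range (m + 1),
        (m.choose k) • ((δ.toLinearMap ^ k) a * (δ.toLinearMap ^ (m + 1 - k)) b) := by
      refine Finset.sum_congr rfl fun k hk => ?_
      rw [Finset.mem_range] at hk
      have h' : m + 1 - k = (m - k) + 1 := by omega
      rw [h', pow_apply_succ]
    have e2 : ∑ k ∈ Finset.range (m + 1),
        (m.choose k) • ((δ.toLinearMap ^ k) (δ a) * (δ.toLinearMap ^ (m - k)) b)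
        = ∑ k ∈ Finset.range (m + 1),
        (m.choose k) • ((δ.toLinearMap ^ (k + 1)) a * (δ.toLinearMap ^ (m - k)) b) := by
      refine Finset.sum_congr rfl fun k _ => ?_
      rw [pow_apply_succ]
    rw [e1, e2]
    have target : ∑ k ∈ Finset.range (m + 2),
        ((m+1).choose k) • ((δ.toLinearMap ^ k) a * (δ.toLinearMap ^ (m + 1 - k)) b)
        = (∑ k ∈ Finset.range (m + 1),
            (m.choose k) • ((δ.toLinearMap ^ k) a * (δ.toLinearMap ^ (m + 1 - k)) b))
          + ∑ k ∈ Finset.range (m + 1),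
            (m.choose k) • ((δ.toLinearMap ^ (k + 1)) a * (δ.toLinearMap ^ (m - k)) b) := by
      rw [Finset.sum_range_succ' _ (m + 1)]
      have peel : ∀ k ∈ Finset.range (m + 1),
          ((m+1).choose (k+1)) • ((δ.toLinearMap ^ (k+1)) a * (δ.toLinearMap ^ (m + 1 - (k+1))) b)
          = (m.choose k) • ((δ.toLinearMap ^ (k+1)) a * (δ.toLinearMap ^ (m - k)) b)
            + (m.choose (k+1)) • ((δ.toLinearMap ^ (k+1)) a * (δ.toLinearMap ^ (m - k)) b) := by
        intro k hk
        have h' : m + 1 - (k + 1) = m - k := by omega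
        rw [h', Nat.choose_succ_succ, add_smul]
      rw [Finset.sum_congr rfl peel, Finset.sum_add_distrib]
      have first : (∑ k ∈ Finset.range (m + 1),
          (m.choose (k+1)) • ((δ.toLinearMap ^ (k+1)) a * (δ.toLinearMap ^ (m - k)) b))
          + ((m+1).choose 0) • ((δ.toLinearMap ^ 0) a * (δ.toLinearMap ^ (m + 1 - 0)) b)
          = ∑ k ∈ Finset.range (m + 1),
            (m.choose k) • ((δ.toLinearMap ^ k) a * (δ.toLinearMap ^ (m + 1 - k)) b) := by
      -- RHS: peel first index
        rw [Finset.sum_range_succ' (fun k => (m.choose k) •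
          ((δ.toLinearMap ^ k) a * (δ.toLinearMap ^ (m + 1 - k)) b)) m]
        rw [Finset.sum_range_succ, Nat.choose_succ_self, zero_smul, add_zero]
        congr 1
        · refine Finset.sum_congr rfl fun k hk => ?_
          have h' : m + 1 - (k + 1) = m - k := by omega
          rw [h']
        · norm_num
      rw [← first]
      abel
    exact target.symm

lemma exists_top_pow (δ : Derivation R A A) {x : A}
    (hx : x ≠ 0) {m : ℕ} (hm : (δ.toLinearMap ^ m) x = 0) :
    ∃ p : ℕ, (δ.toLinearMap ^ p) x ≠ 0 ∧ (δ.toLinearMap ^ (p + 1)) x = 0 := by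
  classical
  have hex : ∃ k, (δ.toLinearMap ^ k) x = 0 := ⟨m, hm⟩
  have hN := Nat.find_spec hex
  have hN0 : Nat.find hex ≠ 0 := by
    intro h0
    rw [h0, pow_zero, Module.End.one_apply] at hN
    exact hx hN
  refine ⟨Nat.find hex - 1, ?_, ?_⟩
  · exact Nat.find_min hex (by omega)
  · have h' : Nat.find hex - 1 + 1 = Nat.find hex := by omega
    rw [h']
    exact hN

lemma lnd_eigen [IsDomain A] [CharZero A] (δ : Derivation R A A)
    (hln : ∀ f : A, ∃ m : ℕ, (δ.toLinearMap ^ m) f = 0)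
    {a h : A} (hd : δ a = a * h) : δ a = 0 := by
  by_contra hne
  have ha : a ≠ 0 := by rintro rfl; exact hne (by simp)
  have hh : h ≠ 0 := by rintro rfl; rw [mul_zero] at hd; exact hne hd
  obtain ⟨ma, hma⟩ := hln a
  obtain ⟨mh, hmh⟩ := hln h
  obtain ⟨p, hp, hp1⟩ := exists_top_pow δ ha hma
  obtain ⟨q, hq, hq1⟩ := exists_top_pow δ hh hmh
  have key := iterLeibniz δ (p + q) a h
  rw [← hd] at key
  have hL : (δ.toLinearMap ^ (p + q)) (δ a) = 0 := by
    rw [← pow_apply_succ]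
    exact pow_apply_zero_of_le δ hp1 (by omega)
  rw [hL] at key
  have hsum : ∑ k ∈ Finset.range (p + q + 1),
      ((p+q).choose k) • ((δ.toLinearMap ^ k) a * (δ.toLinearMap ^ (p + q - k)) h)
      = ((p+q).choose p) • ((δ.toLinearMap ^ p) a * (δ.toLinearMap ^ q) h) := by
    rw [Finset.sum_eq_single p]
    · have h' : p + q - p = q := by omega
      rw [h']
    · intro k hk hkp
      rcases lt_or_gt_of_ne hkp with hlt | hgt
      · have : (δ.toLinearMap ^ (p + q - k)) h = 0 :=
          pow_apply_zero_of_le δ hq1 (by omega)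
        rw [this, mul_zero, smul_zero]
      · have : (δ.toLinearMap ^ k) a = 0 :=
          pow_apply_zero_of_le δ hp1 (by omega)
        rw [this, zero_mul, smul_zero]
    · intro hp'
      exact absurd (Finset.mem_range.mpr (by omega)) hp'
  rw [hsum] at key
  have hC : ((p+q).choose p : A) ≠ 0 := by
    exact Nat.cast_ne_zero.mpr (Nat.choose_pos (show p ≤ p + q by omega)).ne'
  have := key.symm
  rw [nsmul_eq_mul] at this
  exact (mul_ne_zero hC (mul_ne_zero hp hq)) this


private def X0 (n : Fin 3 → ℕ) (hn0 : 0 < n 0) : TrinIdx n := ⟨0, ⟨0, hn0⟩⟩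

private def blkVar (n : Fin 3 → ℕ) (hn0 : 0 < n 0) {i : Fin 3} (hi : i ≠ 0) (j : Fin (n i)) :
    {v : TrinIdx n // v ≠ X0 n hn0} :=
  ⟨⟨i, j⟩, fun h => hi (congrArg Sigma.fst h)⟩

private lemma blkVar_fst (n : Fin 3 → ℕ) (hn0 : 0 < n 0) {i : Fin 3} (hi : i ≠ 0)
    (j : Fin (n i)) : (blkVar n hn0 hi j).1.1 = i := rfl

private def blk0Var (n : Fin 3 → ℕ) (hn0 : 0 < n 0) (hn1 : 0 < n 1) (j : Fin (n 0)) :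
    {v : TrinIdx n // v ≠ X0 n hn0} :=
  if h : (⟨0, j⟩ : TrinIdx n) = X0 n hn0 then blkVar n hn0 (i := 1) (by decide) ⟨0, hn1⟩
  else ⟨⟨0, j⟩, h⟩

private lemma ne_X0_of_snd_ne {n : Fin 3 → ℕ} {hn0 : 0 < n 0} {j : Fin (n 0)}
    (hj : j ≠ ⟨0, hn0⟩) : (⟨0, j⟩ : TrinIdx n) ≠ X0 n hn0 := by
  intro h
  exact hj (eq_of_heq (Sigma.mk.inj_iff.mp h).2)

private lemma blk0Var_eq {n : Fin 3 → ℕ} (hn0 : 0 < n 0) (hn1 : 0 < n 1) {j : Fin (n 0)}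
    (hj : j ≠ ⟨0, hn0⟩) :
    blk0Var n hn0 hn1 j = ⟨(⟨0, j⟩ : TrinIdx n), ne_X0_of_snd_ne hj⟩ := by
  rw [blk0Var, dif_neg (ne_X0_of_snd_ne hj)]

lemma trinomial_prime (K : Type*) [Field K] [CharZero K] (n : Fin 3 → ℕ)
    (l : ∀ i : Fin 3, Fin (n i) → ℕ) (hn : ∀ i, 0 < n i) (hl : ∀ i j, 0 < l i j) :
    Prime (trinomial K n l) := by
  classical
  have hn0 : 0 < n 0 := hn 0
  have hn1 : 0 < n 1 := hn 1
  have hn2 : 0 < n 2 := hn 2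
  set x₀ : TrinIdx n := X0 n hn0 with hx₀def
  set σ' := {v : TrinIdx n // v ≠ x₀} with hσ'def
  set Φ : MvPolynomial (TrinIdx n) K ≃ₐ[K] Polynomial (MvPolynomial σ' K) :=
    (renameEquiv K (Equiv.optionSubtypeNe x₀).symm).trans (optionEquivLeft K σ') with hΦdef
  have hΦX0 : Φ (X x₀) = Polynomial.X := by
    rw [hΦdef]
    simp only [AlgEquiv.trans_apply, renameEquiv_apply, rename_X,
      Equiv.optionSubtypeNe_symm_self, optionEquivLeft_X_none]
  have hΦX : ∀ (v : TrinIdx n) (hv : v ≠ x₀), Φ (X v) = Polynomial.C (X ⟨v, hv⟩) := by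
    intro v hv
    rw [hΦdef]
    simp only [AlgEquiv.trans_apply, renameEquiv_apply, rename_X,
      Equiv.optionSubtypeNe_symm_of_ne hv, optionEquivLeft_X_some]
  set y1 : Fin (n 1) → σ' := blkVar n hn0 (i := 1) (by decide) with hy1def
  set y2 : Fin (n 2) → σ' := blkVar n hn0 (i := 2) (by decide) with hy2def
  set y0 : Fin (n 0) → σ' := blk0Var n hn0 hn1 with hy0def
  set j₀ : Fin (n 0) := ⟨0, hn0⟩ with hj₀def
  set e0 : ℕ := l 0 j₀ with he0def
  set N1 : MvPolynomial σ' K := ∏ jj : Fin (n 1), X (y1 jj) ^ l 1 jj with hN1def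
  set N2 : MvPolynomial σ' K := ∏ jj : Fin (n 2), X (y2 jj) ^ l 2 jj with hN2def
  set mm : MvPolynomial σ' K := ∏ jj ∈ Finset.univ.erase j₀, X (y0 jj) ^ l 0 jj with hmmdef
  set cc : MvPolynomial σ' K := N1 + N2 with hccdef
  -- the image of the trinomial under Φ
  have hΦg : Φ (trinomial K n l)
      = Polynomial.C mm * Polynomial.X ^ e0 + Polynomial.C cc := by
    rw [trinomial, map_sum, Fin.sum_univ_three]
    have hP0 : Φ (∏ jj : Fin (n 0), X (⟨0, jj⟩ : TrinIdx n) ^ l 0 jj)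
        = Polynomial.C mm * Polynomial.X ^ e0 := by
      have hsplit : (∏ jj : Fin (n 0), (X (⟨0, jj⟩ : TrinIdx n) ^ l 0 jj : MvPolynomial (TrinIdx n) K))
          = X x₀ ^ e0 * ∏ jj ∈ Finset.univ.erase j₀, X (⟨0, jj⟩ : TrinIdx n) ^ l 0 jj :=
        (Finset.mul_prod_erase Finset.univ
          (fun jj => X (⟨0, jj⟩ : TrinIdx n) ^ l 0 jj) (Finset.mem_univ j₀)).symm
      rw [hsplit, map_mul, map_pow, hΦX0, map_prod]
      have hfac : ∀ jj ∈ Finset.univ.erase j₀,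
          Φ (X (⟨0, jj⟩ : TrinIdx n) ^ l 0 jj) = Polynomial.C (X (y0 jj) ^ l 0 jj) := by
        intro jj hjj
        have hne : jj ≠ j₀ := (Finset.mem_erase.mp hjj).1
        rw [map_pow, hΦX _ (ne_X0_of_snd_ne hne), hy0def, blk0Var_eq hn0 hn1 hne, map_pow]
      rw [Finset.prod_congr rfl hfac,
        ← map_prod (Polynomial.C : MvPolynomial σ' K →+* Polynomial (MvPolynomial σ' K))]
      ring
    have hP1 : Φ (∏ jj : Fin (n 1), X (⟨1, jj⟩ : TrinIdx n) ^ l 1 jj)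
        = Polynomial.C N1 := by
      rw [map_prod]
      have hfac : ∀ jj ∈ (Finset.univ : Finset (Fin (n 1))),
          Φ (X (⟨1, jj⟩ : TrinIdx n) ^ l 1 jj) = Polynomial.C (X (y1 jj) ^ l 1 jj) := by
        intro jj _
        rw [map_pow, hΦX ⟨1, jj⟩ (y1 jj).2, ← map_pow]
        rfl
      rw [Finset.prod_congr rfl hfac]
      exact (map_prod (Polynomial.C : MvPolynomial σ' K →+* Polynomial (MvPolynomial σ' K))
        (fun jj => X (y1 jj) ^ l 1 jj) Finset.univ).symm
    have hP2 : Φ (∏ jj : Fin (n 2), X (⟨2, jj⟩ : TrinIdx n) ^ l 2 jj)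
        = Polynomial.C N2 := by
      rw [map_prod]
      have hfac : ∀ jj ∈ (Finset.univ : Finset (Fin (n 2))),
          Φ (X (⟨2, jj⟩ : TrinIdx n) ^ l 2 jj) = Polynomial.C (X (y2 jj) ^ l 2 jj) := by
        intro jj _
        rw [map_pow, hΦX ⟨2, jj⟩ (y2 jj).2, ← map_pow]
        rfl
      rw [Finset.prod_congr rfl hfac]
      exact (map_prod (Polynomial.C : MvPolynomial σ' K →+* Polynomial (MvPolynomial σ' K))
        (fun jj => X (y2 jj) ^ l 2 jj) Finset.univ).symm
    rw [hP0, hP1, hP2, hccdef, map_add]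
    ring
  -- monomial forms
  set ν1 : σ' →₀ ℕ := ∑ jj : Fin (n 1), Finsupp.single (y1 jj) (l 1 jj) with hν1def
  set ν2 : σ' →₀ ℕ := ∑ jj : Fin (n 2), Finsupp.single (y2 jj) (l 2 jj) with hν2def
  set ν0 : σ' →₀ ℕ := ∑ jj ∈ Finset.univ.erase j₀, Finsupp.single (y0 jj) (l 0 jj) with hν0def
  have hN1m : N1 = monomial ν1 1 := by
    rw [hN1def, hν1def]; exact prod_X_pow_eq_monomial' _ _ _
  have hN2m : N2 = monomial ν2 1 := by
    rw [hN2def, hν2def]; exact prod_X_pow_eq_monomial' _ _ _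
  have hmmm : mm = monomial ν0 1 := by
    rw [hmmdef, hν0def]; exact prod_X_pow_eq_monomial' _ _ _
  -- coordinates
  have hy1inj : ∀ a ∈ (Finset.univ : Finset (Fin (n 1))), ∀ b ∈ Finset.univ,
      y1 a = y1 b → a = b := by
    intro a _ b _ h
    have h2 : (⟨1, a⟩ : TrinIdx n) = ⟨1, b⟩ := congrArg Subtype.val h
    exact eq_of_heq (Sigma.mk.inj_iff.mp h2).2
  have hν1at : ∀ jj : Fin (n 1), ν1 (y1 jj) = l 1 jj := by
    intro jj
    rw [hν1def]
    exact sum_single_apply_eq _ hy1inj (Finset.mem_univ jj)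
  have hν1ne : ∀ v : σ', v.1.1 ≠ 1 → ν1 v = 0 := by
    intro v hv
    rw [hν1def]
    refine sum_single_apply_ne _ fun a _ h => hv ?_
    rw [← h, hy1def, blkVar_fst]
  have hν2ne : ∀ v : σ', v.1.1 ≠ 2 → ν2 v = 0 := by
    intro v hv
    rw [hν2def]
    refine sum_single_apply_ne _ fun a _ h => hv ?_
    rw [← h, hy2def, blkVar_fst]
  have hν0ne : ∀ v : σ', v.1.1 ≠ 0 → ν0 v = 0 := by
    intro v hv
    rw [hν0def]
    refine sum_single_apply_ne _ fun a ha h => hv ?_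
    have hane : a ≠ j₀ := (Finset.mem_erase.mp ha).1
    rw [← h, hy0def, blk0Var_eq hn0 hn1 hane]
  have hν12 : ν1 ≠ ν2 := by
    intro h
    have h1 : ν1 (y1 ⟨0, hn1⟩) = l 1 ⟨0, hn1⟩ := hν1at _
    have h2 : ν2 (y1 ⟨0, hn1⟩) = 0 := hν2ne _ (by rw [hy1def, blkVar_fst]; decide)
    rw [h] at h1
    exact (hl 1 ⟨0, hn1⟩).ne' (h1.symm.trans h2)
  -- cc is nonzero
  have hccoeff1 : coeff ν1 cc = 1 := by
    rw [hccdef, hN1m, hN2m, coeff_add, coeff_monomial, coeff_monomial,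
      if_pos rfl, if_neg (Ne.symm hν12)]
    norm_num
  have hccne : cc ≠ 0 := by
    intro h
    rw [h, coeff_zero] at hccoeff1
    exact one_ne_zero hccoeff1.symm
  -- no variable divides cc
  have hXdvdcc : ∀ v : σ', ¬ (X v : MvPolynomial σ' K) ∣ cc := by
    intro v hdvd
    obtain ⟨q, hq⟩ := hdvd
    by_cases hb : v.1.1 = 1
    · have hc2 : coeff ν2 cc = 1 := by
        rw [hccdef, hN1m, hN2m, coeff_add, coeff_monomial, coeff_monomial,
          if_neg hν12, if_pos rfl]
        norm_num
      have hv2 : ν2 v = 0 := hν2ne v (by rw [hb]; decide)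
      rw [hq, mul_comm, coeff_mul_X',
        if_neg (by simp [Finsupp.mem_support_iff, hv2])] at hc2
      exact one_ne_zero hc2.symm
    · have hv1 : ν1 v = 0 := hν1ne v hb
      rw [hq, mul_comm, coeff_mul_X',
        if_neg (by simp [Finsupp.mem_support_iff, hv1])] at hccoeff1
      exact one_ne_zero hccoeff1.symm
  -- a prime dividing cc cannot divide a monomial
  have hmono : ∀ π : MvPolynomial σ' K, Prime π → π ∣ cc →
      ∀ s : σ' →₀ ℕ, π ∣ monomial s (1 : K) → False := by
    intro π hπ hπcc s hdvd
    rw [monomial_eq, map_one, one_mul] at hdvd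
    obtain ⟨v, hv, hvd⟩ := hπ.exists_mem_finset_dvd hdvd
    have hXvd : π ∣ (X v : MvPolynomial σ' K) := hπ.dvd_of_dvd_pow hvd
    obtain ⟨t, ht⟩ := hXvd
    rcases (prime_X_mv v).irreducible.isUnit_or_isUnit ht with hu | hu
    · exact hπ.not_unit hu
    · obtain ⟨u, rfl⟩ := hu
      have hXvπ : (X v : MvPolynomial σ' K) ∣ π :=
        ⟨(u⁻¹ : (MvPolynomial σ' K)ˣ), by rw [ht, mul_assoc, Units.mul_inv, mul_one]⟩
      exact hXdvdcc v (hXvπ.trans hπcc)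
  -- cc is not a unit
  have hccu : ¬ IsUnit cc := by
    intro hu
    set ψ : MvPolynomial σ' K →ₐ[K] Polynomial K :=
      aeval (fun v : σ' => if v.1.1 = 1 then (Polynomial.X : Polynomial K) else 1) with hψdef
    have h1 : ψ N1 = Polynomial.X ^ (∑ jj : Fin (n 1), l 1 jj) := by
      rw [hN1def, map_prod]
      have hfac : ∀ jj ∈ (Finset.univ : Finset (Fin (n 1))),
          ψ (X (y1 jj) ^ l 1 jj) = Polynomial.X ^ l 1 jj := by
        intro jj _
        rw [map_pow, hψdef, aeval_X,
          if_pos (show (y1 jj).1.1 = 1 by rw [hy1def, blkVar_fst])]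
      rw [Finset.prod_congr rfl hfac]
      exact Finset.prod_pow_eq_pow_sum _ _ _
    have h2 : ψ N2 = 1 := by
      rw [hN2def, map_prod]
      refine Finset.prod_eq_one fun jj _ => ?_
      rw [map_pow, hψdef, aeval_X,
        if_neg (show ¬ (y2 jj).1.1 = 1 by rw [hy2def, blkVar_fst]; decide), one_pow]
    have h3 : IsUnit (Polynomial.X ^ (∑ jj : Fin (n 1), l 1 jj) + (1 : Polynomial K)) := by
      rw [← h1, ← h2, ← map_add, ← hccdef]
      exact hu.map ψ
    have hs : 0 < ∑ jj : Fin (n 1), l 1 jj :=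
      Finset.sum_pos (fun jj _ => hl 1 jj) ⟨⟨0, hn1⟩, Finset.mem_univ _⟩
    have hd := Polynomial.degree_eq_zero_of_isUnit h3
    rw [show (1 : Polynomial K) = Polynomial.C 1 from (map_one _).symm,
      Polynomial.degree_X_pow_add_C hs] at hd
    exact hs.ne' (by exact_mod_cast hd)
  -- cc is squarefree
  have hsf : Squarefree cc := by
    intro r hr
    by_contra hru
    have hr0 : r ≠ 0 := by
      rintro rfl
      rw [zero_mul, zero_dvd_iff] at hr
      exact hccne hr
    obtain ⟨π, hπirr, hπr⟩ := WfDvdMonoid.exists_irreducible_factor hru hr0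
    have hπ : Prime π := UniqueFactorizationMonoid.irreducible_iff_prime.mp hπirr
    have hπcc : π ∣ cc := hπr.trans ((dvd_mul_right r r).trans hr)
    obtain ⟨t, hct⟩ := hr
    set w1 : σ' := y1 ⟨0, hn1⟩ with hw1def
    have hπd : π ∣ (pderiv w1) cc := by
      rw [hct, pderiv_mul, pderiv_mul]
      exact dvd_add (dvd_mul_of_dvd_left (dvd_add (hπr.mul_left _) (hπr.mul_right _)) t)
        ((hπr.mul_right r).mul_right _)
    have hz1 : ν1 w1 = l 1 ⟨0, hn1⟩ := by rw [hw1def]; exact hν1at _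
    have hz2 : ν2 w1 = 0 := hν2ne w1 (by rw [hw1def, hy1def, blkVar_fst]; decide)
    have hpd2 : (pderiv w1) cc = monomial (ν1 - Finsupp.single w1 1) ((l 1 ⟨0, hn1⟩ : K)) := by
      rw [hccdef, map_add, hN1m, hN2m, pderiv_monomial, pderiv_monomial, hz1, hz2]
      simp
    have hXmul : (X w1 : MvPolynomial σ' K) * (pderiv w1) cc
        = monomial ν1 ((l 1 ⟨0, hn1⟩ : K)) := by
      rw [hpd2, show (X w1 : MvPolynomial σ' K) = monomial (Finsupp.single w1 1) 1 from
        by rw [← pow_one (X w1 : MvPolynomial σ' K), X_pow_eq_monomial], monomial_mul, one_mul,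
        add_tsub_cancel_of_le (Finsupp.single_le_iff.mpr (by rw [hz1]; exact hl 1 ⟨0, hn1⟩))]
    have hlc : ((l 1 ⟨0, hn1⟩ : K)) ≠ 0 := by
      exact_mod_cast (hl 1 ⟨0, hn1⟩).ne'
    have hπm : π ∣ monomial ν1 ((l 1 ⟨0, hn1⟩ : K)) := by
      rw [← hXmul]
      exact hπd.mul_left _
    have hπN1 : π ∣ monomial ν1 (1 : K) := by
      have hmono1 : monomial ν1 (1 : K) = C ((l 1 ⟨0, hn1⟩ : K))⁻¹
          * monomial ν1 ((l 1 ⟨0, hn1⟩ : K)) := by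
        rw [C_mul_monomial, inv_mul_cancel₀ hlc]
      rw [hmono1]
      exact hπm.mul_left _
    exact hmono π hπ hπcc ν1 hπN1
  -- Eisenstein
  set f : Polynomial (MvPolynomial σ' K)
    := Polynomial.C mm * Polynomial.X ^ e0 + Polynomial.C cc with hfdef
  have hcoef : ∀ k : ℕ, f.coeff k = (if k = e0 then mm else 0) + (if k = 0 then cc else 0) := by
    intro k
    rw [hfdef, Polynomial.coeff_add, Polynomial.coeff_C_mul, Polynomial.coeff_X_pow,
      Polynomial.coeff_C, mul_ite, mul_one, mul_zero]
  have he0pos : 0 < e0 := hl 0 j₀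
  have hmm0 : mm ≠ 0 := by
    rw [hmmm]
    intro h
    have h2 := congrArg (coeff ν0) h
    rw [coeff_monomial, if_pos rfl, coeff_zero] at h2
    exact one_ne_zero h2
  have h1deg : (Polynomial.C mm * Polynomial.X ^ e0).degree = (e0 : WithBot ℕ) :=
    Polynomial.degree_C_mul_X_pow e0 hmm0
  have hdegf : f.degree = (e0 : WithBot ℕ) := by
    rw [hfdef, Polynomial.degree_add_eq_left_of_degree_lt, h1deg]
    rw [h1deg]
    exact lt_of_le_of_lt Polynomial.degree_C_le (by exact_mod_cast he0pos)
  have hnatdeg : f.natDegree = e0 := Polynomial.natDegree_eq_of_degree_eq_some hdegf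
  have hlead : f.leadingCoeff = mm := by
    rw [Polynomial.leadingCoeff, hnatdeg, hcoef, if_pos rfl, if_neg he0pos.ne', add_zero]
  obtain ⟨π, hπirr, hπcc⟩ := WfDvdMonoid.exists_irreducible_factor hccu hccne
  have hπ : Prime π := UniqueFactorizationMonoid.irreducible_iff_prime.mp hπirr
  have hP : (Ideal.span {π} : Ideal (MvPolynomial σ' K)).IsPrime :=
    (Ideal.span_singleton_prime hπ.ne_zero).mpr hπ
  have hIrr : Irreducible f := by
    refine Polynomial.irreducible_of_eisenstein_criterion hP ?_ ?_ ?_ ?_ ?_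
    · rw [hlead, Ideal.mem_span_singleton]
      intro hd
      exact hmono π hπ hπcc ν0 (by rwa [hmmm] at hd)
    · intro k hk
      rw [hdegf] at hk
      have hk' : k ≠ e0 := by
        intro h
        rw [h] at hk
        exact lt_irrefl _ hk
      rw [hcoef, if_neg hk']
      by_cases h0 : k = 0
      · rw [if_pos h0, zero_add]
        exact Ideal.mem_span_singleton.mpr hπcc
      · rw [if_neg h0, add_zero]
        exact Submodule.zero_mem _
    · rw [hdegf]
      exact_mod_cast he0pos
    · rw [hcoef, if_neg he0pos.ne, if_pos rfl, zero_add, Ideal.span_singleton_pow,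
        Ideal.mem_span_singleton]
      intro hd
      rw [pow_two] at hd
      exact hπ.not_unit (hsf π hd)
    · intro r hr
      by_contra hru
      have hrm : r ∣ mm := by
        have h2 := (Polynomial.C_dvd_iff_dvd_coeff r f).mp hr e0
        rwa [hcoef, if_pos rfl, if_neg he0pos.ne', add_zero] at h2
      have hrc : r ∣ cc := by
        have h2 := (Polynomial.C_dvd_iff_dvd_coeff r f).mp hr 0
        rwa [hcoef, if_neg he0pos.ne, if_pos rfl, zero_add] at h2
      have hr0 : r ≠ 0 := by
        rintro rfl
        exact hmm0 (zero_dvd_iff.mp hrm)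
      obtain ⟨π', hπ'irr, hπ'r⟩ := WfDvdMonoid.exists_irreducible_factor hru hr0
      exact hmono π' (UniqueFactorizationMonoid.irreducible_iff_prime.mp hπ'irr)
        (hπ'r.trans hrc) ν0 (by rw [← hmmm]; exact hπ'r.trans hrm)
  refine (MulEquiv.prime_iff Φ.toRingEquiv.toMulEquiv).mp ?_
  show Prime (Φ (trinomial K n l))
  rw [hΦg]
  exact UniqueFactorizationMonoid.irreducible_iff_prime.mp hIrr


end TrinAux

/-- If `δ` is a locally nilpotent derivation of `R(g)` homogeneous with respect to the finest
grading `deg T_{ij} = Q(e_{ij})`, then each monomial `T_i^{l_i}` contains at most one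
variable `T_{ij}` with `δ(T_{ij}) ≠ 0`. -/
theorem lnd_at_most_one_variable_not_in_kernel (K : Type*) [Field K] [IsAlgClosed K]
    [CharZero K] (n : Fin 3 → ℕ) (l : ∀ i : Fin 3, Fin (n i) → ℕ)
    (hn : ∀ i, 0 < n i) (hl : ∀ i j, 0 < l i j)
    (δ : Derivation K (TrinAlg K n l) (TrinAlg K n l))
    (hln : IsLND K l δ) (hhom : IsHomogDer K l (trinDeg n l) δ) :
    ∀ i : Fin 3, ∀ j j' : Fin (n i),
      δ (Ideal.Quotient.mk (Ideal.span {trinomial K n l}) (X (⟨i, j⟩ : TrinIdx n))) ≠ 0 →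
      δ (Ideal.Quotient.mk (Ideal.span {trinomial K n l}) (X (⟨i, j'⟩ : TrinIdx n))) ≠ 0 →
      j = j' := by
  classical
  have hgp : Prime (trinomial K n l) := TrinAux.trinomial_prime K n l hn hl
  haveI hIp : (Ideal.span {trinomial K n l}).IsPrime :=
    (Ideal.span_singleton_prime hgp.ne_zero).mpr hgp
  haveI hdom : IsDomain (TrinAlg K n l) :=
    (Ideal.Quotient.isDomain_iff_prime _).mpr hIp
  haveI : CharZero (TrinAlg K n l) :=
    charZero_of_injective_algebraMap (algebraMap K (TrinAlg K n l)).injective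
  intro i j j' hj hj'
  by_contra hjj
  obtain ⟨d, hder⟩ := hhom
  obtain ⟨w, rfl⟩ := Submodule.Quotient.mk_surjective _ d
  have main : ∀ jj : Fin (n i),
      δ (Ideal.Quotient.mk (Ideal.span {trinomial K n l}) (X (⟨i, jj⟩ : TrinIdx n))) ≠ 0 →
      ∃ lam : TrinIdx n → ℤ, lam ∈ Submodule.span ℤ {trinRow n l 1, trinRow n l 2} ∧
        1 + w ⟨i, jj⟩ + lam ⟨i, jj⟩ = 0 ∧
        ∀ y : TrinIdx n, y ≠ ⟨i, jj⟩ → 0 ≤ w y + lam y := by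
    intro jj hjj0
    obtain ⟨p, hp, hpmon⟩ := hder _ _ (TrinAux.isHomog_X ⟨i, jj⟩)
    have hex : ∃ m ∈ p.support, m ⟨i, jj⟩ = 0 := by
      by_contra hex
      push_neg at hex
      have hdvd : (X (⟨i, jj⟩ : TrinIdx n) : MvPolynomial (TrinIdx n) K) ∣ p := by
        rw [← MvPolynomial.support_sum_monomial_coeff p]
        refine Finset.dvd_sum fun m hm => ?_
        exact X_dvd_monomial.mpr (Or.inr (hex m hm))
      obtain ⟨q, hq⟩ := hdvd
      have heig : δ (Ideal.Quotient.mk (Ideal.span {trinomial K n l}) (X (⟨i, jj⟩ : TrinIdx n)))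
          = Ideal.Quotient.mk (Ideal.span {trinomial K n l}) (X (⟨i, jj⟩ : TrinIdx n))
            * Ideal.Quotient.mk (Ideal.span {trinomial K n l}) q := by
        rw [← map_mul, ← hq, hp]
      exact hjj0 (TrinAux.lnd_eigen δ hln heig)
    obtain ⟨m, hmsupp, hmz⟩ := hex
    have hdeg := hpmon m hmsupp
    rw [TrinAux.monWeight_trinDeg] at hdeg
    have hsum : (trinDeg n l ⟨i, jj⟩ + Submodule.Quotient.mk w : TrinGradeGroup n l)
        = Submodule.Quotient.mk ((Pi.single (⟨i, jj⟩ : TrinIdx n) 1 : TrinIdx n → ℤ) + w) := by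
      unfold trinDeg trinQ
      rw [← Submodule.mkQ_apply, ← Submodule.mkQ_apply, ← Submodule.mkQ_apply, map_add]
    have hdeg2 := hdeg.trans hsum
    unfold trinQ at hdeg2
    rw [Submodule.Quotient.eq] at hdeg2
    refine ⟨(fun x => (m x : ℤ)) - ((Pi.single (⟨i, jj⟩ : TrinIdx n) (1 : ℤ) : TrinIdx n → ℤ) + w),
      hdeg2, ?_, ?_⟩
    · have hmz' : (m ⟨i, jj⟩ : ℤ) = 0 := by exact_mod_cast hmz
      simp only [Pi.sub_apply, Pi.add_apply, Pi.single_eq_same, hmz']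
      ring
    · intro y hy
      have hsy : (Pi.single (⟨i, jj⟩ : TrinIdx n) (1 : ℤ) : TrinIdx n → ℤ) y = 0 := Pi.single_eq_of_ne hy _
      simp only [Pi.sub_apply, Pi.add_apply, hsy]
      have : (0 : ℤ) ≤ (m y : ℤ) := Int.natCast_nonneg _
      linarith
  obtain ⟨lam, hlamS, h1, h2all⟩ := main j hj
  obtain ⟨lam', hlamS', h3, h4all⟩ := main j' hj'
  have hne1 : (⟨i, j'⟩ : TrinIdx n) ≠ ⟨i, j⟩ := by
    intro h
    exact hjj (eq_of_heq (Sigma.mk.inj_iff.mp h).2).symm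
  have hne2 : (⟨i, j⟩ : TrinIdx n) ≠ ⟨i, j'⟩ := fun h => hne1 h.symm
  have h2 := h2all ⟨i, j'⟩ hne1
  have h4 := h4all ⟨i, j⟩ hne2
  have hc1 := TrinAux.span_cross hlamS i j j'
  have hc2 := TrinAux.span_cross hlamS' i j j'
  have ha1 : (0 : ℤ) < (l i j : ℤ) := by exact_mod_cast hl i j
  have ha2 : (0 : ℤ) < (l i j' : ℤ) := by exact_mod_cast hl i j'
  have e1 : (1 + w ⟨i, j⟩ + lam ⟨i, j⟩) * (l i j' : ℤ) = 0 := by rw [h1]; ring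
  have e3 : (1 + w ⟨i, j'⟩ + lam' ⟨i, j'⟩) * (l i j : ℤ) = 0 := by rw [h3]; ring
  have A := mul_le_mul_of_nonneg_right h2 ha1.le
  have B := mul_le_mul_of_nonneg_right h4 ha2.le
  nlinarith [e1, e3, hc1, hc2, A, B, ha1, ha2]
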